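/- Let n = 5, let the divider's value be g^D_i = 1 for each good i, and let the chooser's values g^C_1,…,g^C_5 be i.i.d., each equal to 1/100 with probability 3/5 and equal to 1 with probability 2/5. Consider the division p = (1, 2/5, 2/5, 2/5, 2/5), i.e., q = (1, −1/5, −1/5, −1/5, −1/5). Then the chooser strictly prefers pile 2 exactly when g^C_1 = 1/100 and at least one of g^C_2,…,g^C_5 equals 1; this event has probability (3/5)·(1 − (3/5)⁴) > 1/2, no realization makes the chooser indifferent, and the divider's expected utility U(q) strictly exceeds his baseline utility 5/2. -/

import Mathlib

open BigOperators MeasureTheory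

private lemma enn55 : (3/5 : ENNReal) + 2/5 = 1 := by
  rw [ENNReal.div_add_div_same, show (3+2:ENNReal) = 5 by norm_num,
    ENNReal.div_self (by norm_num) (by norm_num)]

private lemma sbe_exists_iff (x : Fin 5 → ℝ) :
    (∃ i : Fin 5, i ≠ 0 ∧ x i = 1) ↔ (x 1 = 1 ∨ x 2 = 1 ∨ x 3 = 1 ∨ x 4 = 1) := by
  constructor
  · rintro ⟨i, hi, h⟩
    fin_cases i <;> simp_all
  · rintro (h|h|h|h)
    exacts [⟨1, by decide, h⟩, ⟨2, by decide, h⟩, ⟨3, by decide, h⟩, ⟨4, by decide, h⟩]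

private lemma sbe_key (x : Fin 5 → ℝ) (hx : ∀ i, x i = 1 / 100 ∨ x i = 1) :
    ((∑ i, (![1, -1/5, -1/5, -1/5, -1/5] : Fin 5 → ℝ) i * x i) < 0 ↔
      (x 0 = 1 / 100 ∧ ∃ i : Fin 5, i ≠ 0 ∧ x i = 1)) := by
  rw [sbe_exists_iff]
  rcases hx 0 with h0|h0 <;> rcases hx 1 with h1|h1 <;> rcases hx 2 with h2|h2 <;>
    rcases hx 3 with h3|h3 <;> rcases hx 4 with h4|h4 <;>
    simp [Fin.sum_univ_five, h0, h1, h2, h3, h4] <;> norm_num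

private lemma sbe_key_ne (x : Fin 5 → ℝ) (hx : ∀ i, x i = 1 / 100 ∨ x i = 1) :
    (∑ i, (![1, -1/5, -1/5, -1/5, -1/5] : Fin 5 → ℝ) i * x i) ≠ 0 := by
  rcases hx 0 with h0|h0 <;> rcases hx 1 with h1|h1 <;> rcases hx 2 with h2|h2 <;>
    rcases hx 3 with h3|h3 <;> rcases hx 4 with h4|h4 <;>
    simp [Fin.sum_univ_five, h0, h1, h2, h3, h4] <;> norm_num

theorem symmetry_breaking_example
    (ν : Measure ℝ)
    (hν : ν = (3 / 5 : ENNReal) • Measure.dirac (1 / 100 : ℝ)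
            + (2 / 5 : ENNReal) • Measure.dirac (1 : ℝ))
    (μ : Measure (Fin 5 → ℝ)) (hμ : μ = Measure.pi fun _ => ν)
    (gD : Fin 5 → ℝ) (hgD : ∀ i, gD i = 1)
    (q : Fin 5 → ℝ) (hq : q = ![1, -1/5, -1/5, -1/5, -1/5])
    (P U : ℝ)
    (hP : P = (μ {x | 0 < ∑ i, q i * x i}).toReal)
    (hU : U = P * ∑ i, (1 - (1 + q i) / 2) * gD i
            + (1 - P) * ∑ i, ((1 + q i) / 2) * gD i) :
    (∀ x : Fin 5 → ℝ, (∀ i, x i = 1 / 100 ∨ x i = 1) →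
      ((∑ i, q i * x i) < 0 ↔ (x 0 = 1 / 100 ∧ ∃ i : Fin 5, i ≠ 0 ∧ x i = 1))) ∧
    (μ {x | (∑ i, q i * x i) < 0}).toReal = (3 / 5) * (1 - (3 / 5 : ℝ) ^ 4) ∧
    (1 / 2 : ℝ) < (3 / 5) * (1 - (3 / 5 : ℝ) ^ 4) ∧
    μ {x | (∑ i, q i * x i) = 0} = 0 ∧
    (5 / 2 : ℝ) < U := by
  subst hq
  -- basic facts about ν
  have hna : ν {(1/100:ℝ)} = 3/5 := by
    simp [hν, Measure.dirac_apply, Set.indicator_apply]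
  have hnu : ν Set.univ = 1 := by
    rw [hν]
    simp only [Measure.add_apply, Measure.smul_apply, measure_univ, smul_eq_mul, mul_one]
    exact enn55
  have hnpair : ν {(1/100:ℝ), 1} = 1 := by
    rw [hν]
    simp only [Measure.add_apply, Measure.smul_apply, smul_eq_mul, Measure.dirac_apply,
      Set.indicator_apply]
    norm_num
    exact enn55
  haveI hνp : IsProbabilityMeasure ν := ⟨hnu⟩
  haveI hμp : IsProbabilityMeasure μ := by rw [hμ]; infer_instance
  -- key sets
  set A : Set (Fin 5 → ℝ) := {x | x 0 = 1/100} with hA_def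
  set D : Set (Fin 5 → ℝ) := Set.pi Set.univ (fun _ => {(1/100:ℝ)}) with hD_def
  set S : Set (Fin 5 → ℝ) := Set.pi Set.univ (fun _ => ({1/100, 1} : Set ℝ)) with hS_def
  have hAm : MeasurableSet A := measurable_pi_apply 0 (measurableSet_singleton _)
  have hDm : MeasurableSet D := MeasurableSet.univ_pi fun _ => measurableSet_singleton _
  have hSm : MeasurableSet S :=
    MeasurableSet.univ_pi fun _ => (measurableSet_singleton (1:ℝ)).insert _
  have hDA : D ⊆ A := fun x hx => hx 0 (Set.mem_univ 0)
  -- measures of key sets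
  have hAμ : μ A = 3/5 := by
    have hset : A = Set.pi Set.univ (fun i => if i = 0 then {(1/100:ℝ)} else Set.univ) := by
      ext x
      simp only [hA_def, Set.mem_pi, Set.mem_univ, true_implies, Set.mem_setOf_eq]
      constructor
      · intro h i; split <;> simp_all
      · intro h; have := h 0; simpa using this
    rw [hμ, hset, Measure.pi_pi, Fin.prod_univ_five]
    norm_num [hna, hnu, show ((1:Fin 5) = 0) = False by decide,
      show ((2:Fin 5) = 0) = False by decide, show ((3:Fin 5) = 0) = False by decide,
      show ((4:Fin 5) = 0) = False by decide]
  have hDμ : μ D = (3/5)^5 := by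
    rw [hμ, hD_def, Measure.pi_pi, Fin.prod_univ_five, hna]; ring
  have hBμ : μ (A \ D) = 3/5 - (3/5)^5 := by
    rw [measure_diff hDA hDm.nullMeasurableSet (measure_ne_top μ D), hAμ, hDμ]
  -- the support
  have hSμc : μ Sᶜ = 0 := by
    have hSμ : μ S = 1 := by
      rw [hμ, hS_def, Measure.pi_pi, Finset.prod_const, hnpair, one_pow]
    rw [prob_compl_eq_one_sub hSm, hSμ, tsub_self]
  have haeS : ∀ᵐ x ∂μ, x ∈ S := by
    rw [ae_iff]
    exact hSμc
  have hmemS : ∀ x : Fin 5 → ℝ, x ∈ S → ∀ i, x i = 1/100 ∨ x i = 1 := by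
    intro x hx i
    have := hx i (Set.mem_univ i)
    simpa using this
  -- on the support, {sum < 0} coincides with A \ D
  have hkey2 : ∀ x : Fin 5 → ℝ, x ∈ S →
      ((∑ i, (![1, -1/5, -1/5, -1/5, -1/5] : Fin 5 → ℝ) i * x i) < 0 ↔ x ∈ A \ D) := by
    intro x hxS
    have hx := hmemS x hxS
    rw [sbe_key x hx]
    constructor
    · rintro ⟨h0, i, hi, h1⟩
      refine ⟨h0, fun hD => ?_⟩
      have := hD i (Set.mem_univ i)
      simp only [Set.mem_singleton_iff] at this
      rw [this] at h1; norm_num at h1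
    · rintro ⟨h0, hD⟩
      refine ⟨h0, ?_⟩
      by_contra hcon
      push_neg at hcon
      apply hD
      intro i _
      show x i ∈ ({1/100} : Set ℝ)
      rcases hx i with h|h
      · simpa using h
      · exfalso
        have hi0 : i ≠ 0 := by
          rintro rfl
          rw [h0] at h; norm_num at h
        exact (hcon i hi0) h
  have hcong : {x : Fin 5 → ℝ | (∑ i, (![1, -1/5, -1/5, -1/5, -1/5] : Fin 5 → ℝ) i * x i) < 0}
      =ᵐ[μ] (A \ D : Set (Fin 5 → ℝ)) := by
    rw [Filter.eventuallyEq_set]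
    filter_upwards [haeS] with x hxS
    exact hkey2 x hxS
  have hTμ : μ {x : Fin 5 → ℝ | (∑ i, (![1, -1/5, -1/5, -1/5, -1/5] : Fin 5 → ℝ) i * x i) < 0}
      = 3/5 - (3/5)^5 := by rw [measure_congr hcong, hBμ]
  -- toReal computations
  have hle : ((3:ENNReal)/5)^5 ≤ 3/5 := by
    rw [← hDμ, ← hAμ]; exact measure_mono hDA
  have h35 : ((3:ENNReal)/5).toReal = (3/5 : ℝ) := by
    rw [ENNReal.toReal_div]; norm_num
  have htr : (3/5 - (3/5)^5 : ENNReal).toReal = 3/5 * (1 - (3/5:ℝ)^4) := by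
    rw [ENNReal.toReal_sub_of_le hle (by simp [ENNReal.div_eq_top]), ENNReal.toReal_pow, h35]
    norm_num
  -- the zero set
  have hzero : μ {x : Fin 5 → ℝ |
      (∑ i, (![1, -1/5, -1/5, -1/5, -1/5] : Fin 5 → ℝ) i * x i) = 0} = 0 := by
    refine measure_mono_null ?_ hSμc
    intro x hx hxS
    exact sbe_key_ne x (hmemS x hxS) hx
  -- the positive set
  have hposμ : μ {x : Fin 5 → ℝ |
      (0:ℝ) < ∑ i, (![1, -1/5, -1/5, -1/5, -1/5] : Fin 5 → ℝ) i * x i}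
      = 1 - (3/5 - (3/5)^5) := by
    have hcong2 : {x : Fin 5 → ℝ |
        (0:ℝ) < ∑ i, (![1, -1/5, -1/5, -1/5, -1/5] : Fin 5 → ℝ) i * x i} =ᵐ[μ] ((A \ D : Set (Fin 5 → ℝ))ᶜ : Set (Fin 5 → ℝ)) := by
      rw [Filter.eventuallyEq_set]
      filter_upwards [haeS] with x hxS
      rw [Set.mem_compl_iff, ← hkey2 x hxS]
      have hne := sbe_key_ne x (hmemS x hxS)
      constructor
      · intro h hlt; exact absurd h (not_lt.mpr hlt.le)
      · intro h; exact hne.lt_or_gt.resolve_left h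
    rw [measure_congr hcong2, prob_compl_eq_one_sub (hAm.diff hDm), hBμ]
  have hPval : P = 1 - (3/5 - (3/5:ℝ)^5) := by
    rw [hP, hposμ, ENNReal.toReal_sub_of_le (le_trans (hBμ ▸ prob_le_one) le_rfl) ENNReal.one_ne_top,
      ENNReal.toReal_sub_of_le hle (by simp [ENNReal.div_eq_top]), ENNReal.toReal_pow, h35,
      ENNReal.toReal_one]
  refine ⟨?_, ?_, by norm_num, hzero, ?_⟩
  · intro x hx
    exact sbe_key x hx
  · rw [hTμ, htr]
  · rw [hU, hPval, Fin.sum_univ_five, Fin.sum_univ_five]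
    simp only [hgD]
    simp only [Matrix.cons_val]
    norm_num [Matrix.cons_val_zero, Matrix.cons_val_one, Matrix.head_cons]
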